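/- Let $f: \mathbb{R}^n \to \mathbb{R}$ be continuous and let $\{x_k\}$ be a bounded sequence in $\mathbb{R}^n$ with $\lim_{k\to\infty} \|x_{k+1} - x_k\| = 0$. Let $\mathcal{B}$ be the set of cluster points of $\{x_k\}$. Then the set $\{f(x) : x \in \mathcal{B}\}$ is a connected subset of $\mathbb{R}$ (i.e., an interval). -/
import Mathlib


open Filter Metric Set

theorem stmt11 (n : ℕ) (f : EuclideanSpace ℝ (Fin n) → ℝ) (hf : Continuous f)
    (x : ℕ → EuclideanSpace ℝ (Fin n))
    (hxbdd : ∃ M : ℝ, ∀ k, ‖x k‖ ≤ M)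
    (hdiff : Tendsto (fun k => ‖x (k + 1) - x k‖) atTop (nhds 0)) :
    IsConnected
      (f '' {y | ∃ φ : ℕ → ℕ, StrictMono φ ∧ Tendsto (fun j => x (φ j)) atTop (nhds y)}) := by
  obtain ⟨M, hM⟩ := hxbdd
  set B : Set (EuclideanSpace ℝ (Fin n)) :=
    {y | ∃ φ : ℕ → ℕ, StrictMono φ ∧ Tendsto (fun j => x (φ j)) atTop (nhds y)} with hB
  -- B is the set of cluster points
  have hBeq : B = {y | MapClusterPt y atTop x} := by
    ext y
    constructor
    · rintro ⟨φ, hφ, hlim⟩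
      exact MapClusterPt.of_comp hφ.tendsto_atTop hlim.mapClusterPt
    · intro h
      obtain ⟨ψ, hψ, hlim⟩ := TopologicalSpace.FirstCountableTopology.tendsto_subseq h
      exact ⟨ψ, hψ, hlim⟩
  have hBclosed : IsClosed B := by
    rw [hBeq]
    exact isClosed_setOf_clusterPt
  have hBsub : B ⊆ Metric.closedBall 0 M := by
    rintro y ⟨φ, hφ, hlim⟩
    rw [Metric.mem_closedBall, dist_zero_right]
    exact le_of_tendsto (hlim.norm) (Eventually.of_forall fun j => hM (φ j))
  have hBcompact : IsCompact B :=
    (isCompact_closedBall (0 : EuclideanSpace ℝ (Fin n)) M).of_isClosed_subset hBclosed hBsub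
  have hxball : ∀ k, x k ∈ Metric.closedBall (0 : EuclideanSpace ℝ (Fin n)) M := by
    intro k; rw [Metric.mem_closedBall, dist_zero_right]; exact hM k
  have hBne : B.Nonempty := by
    obtain ⟨a, _, φ, hφ, hlim⟩ :=
      tendsto_subseq_of_bounded Metric.isBounded_closedBall hxball
    exact ⟨a, φ, hφ, hlim⟩
  -- the sequence eventually comes within ε of B
  have hclose : ∀ ε : ℝ, 0 < ε → ∀ᶠ k in atTop, infDist (x k) B < ε := by
    intro ε hε
    by_contra h
    rw [Filter.not_eventually] at h
    have hfreq : ∃ᶠ k in atTop, x k ∈ Metric.closedBall (0 : EuclideanSpace ℝ (Fin n)) M ∩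
        {z | ε ≤ infDist z B} := by
      refine h.mono fun k hk => ⟨hxball k, ?_⟩
      simpa using not_lt.mp hk
    have hbdd : Bornology.IsBounded (Metric.closedBall (0 : EuclideanSpace ℝ (Fin n)) M ∩
        {z | ε ≤ infDist z B}) := Metric.isBounded_closedBall.subset inter_subset_left
    obtain ⟨a, ha, φ, hφ, hlim⟩ := tendsto_subseq_of_frequently_bounded hbdd hfreq
    have haB : a ∈ B := ⟨φ, hφ, hlim⟩
    have hclosedS : IsClosed (Metric.closedBall (0 : EuclideanSpace ℝ (Fin n)) M ∩
        {z | ε ≤ infDist z B}) :=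
      Metric.isClosed_closedBall.inter (isClosed_le continuous_const
        (continuous_infDist_pt B))
    rw [hclosedS.closure_eq] at ha
    have : ε ≤ infDist a B := ha.2
    rw [infDist_zero_of_mem haB] at this
    linarith
  -- B is preconnected
  have hBconn : IsPreconnected B := by
    rw [isPreconnected_iff_subset_of_fully_disjoint_closed hBclosed]
    intro u v hu hv hBuv huv
    by_contra hcon
    push_neg at hcon
    obtain ⟨hnu, hnv⟩ := hcon
    set A : Set (EuclideanSpace ℝ (Fin n)) := B ∩ u with hA
    set C : Set (EuclideanSpace ℝ (Fin n)) := B ∩ v with hC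
    have hBAC : B = A ∪ C := by
      apply Subset.antisymm
      · intro z hz
        rcases hBuv hz with h | h
        · exact Or.inl ⟨hz, h⟩
        · exact Or.inr ⟨hz, h⟩
      · exact union_subset inter_subset_left inter_subset_left
    have hAcomp : IsCompact A := hBcompact.inter_right hu
    have hCcomp : IsCompact C := hBcompact.inter_right hv
    have hAne : A.Nonempty := by
      obtain ⟨z, hzB, hzv⟩ := not_subset.mp hnv
      rcases hBuv hzB with h | h
      · exact ⟨z, hzB, h⟩
      · exact absurd h hzv
    have hCne : C.Nonempty := by
      obtain ⟨z, hzB, hzu⟩ := not_subset.mp hnu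
      rcases hBuv hzB with h | h
      · exact absurd h hzu
      · exact ⟨z, hzB, h⟩
    have hACdisj : Disjoint A C := huv.mono inter_subset_right inter_subset_right
    obtain ⟨δ, hδ, hdisj⟩ := hACdisj.exists_thickenings hAcomp hCcomp.isClosed
    have hstep : ∀ᶠ k in atTop, ‖x (k + 1) - x k‖ < δ / 2 :=
      hdiff.eventually (gt_mem_nhds (by linarith : (0:ℝ) < δ / 2))
    have hnear : ∀ᶠ k in atTop, x k ∈ thickening (δ/2) A ∪ thickening (δ/2) C := by
      filter_upwards [hclose (δ/2) (by linarith)] with k hk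
      rw [← thickening_union, ← hBAC]
      exact (mem_thickening_iff_infDist_lt hBne).mpr hk
    obtain ⟨N, hN⟩ := eventually_atTop.mp (hstep.and hnear)
    -- x is frequently in thickening (δ/2) A and in thickening (δ/2) C
    have hfreq : ∀ (S : Set (EuclideanSpace ℝ (Fin n))), S.Nonempty → S ⊆ B →
        ∃ᶠ k in atTop, x k ∈ thickening (δ/2) S := by
      rintro S ⟨a, haS⟩ hSB
      obtain ⟨φ, hφ, hlim⟩ := hSB haS
      rw [frequently_atTop]
      intro N0
      have hev : ∀ᶠ j in atTop, x (φ j) ∈ thickening (δ/2) S := by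
        have hb : Metric.ball a (δ/2) ⊆ thickening (δ/2) S := ball_subset_thickening haS _
        exact (hlim.eventually (Metric.ball_mem_nhds a (by linarith))).mono fun j hj => hb hj
      obtain ⟨j, hj1, hj2⟩ := ((eventually_ge_atTop N0).and hev).exists
      exact ⟨φ j, le_trans hj1 hφ.le_apply, hj2⟩
    have hfreqA := hfreq A hAne (hBAC ▸ subset_union_left)
    have hfreqC := hfreq C hCne (hBAC ▸ subset_union_right)
    have hdisj2 : Disjoint (thickening (δ/2) A) (thickening (δ/2) C) :=
      hdisj.mono (thickening_mono (by linarith) A) (thickening_mono (by linarith) C)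
    -- find a transition index
    have key : ∃ k, N ≤ k ∧ x k ∈ thickening (δ/2) A ∧ x (k+1) ∉ thickening (δ/2) A := by
      by_contra h
      push_neg at h
      obtain ⟨k₀, hk₀N, hk₀⟩ := frequently_atTop.mp hfreqA N
      have hall : ∀ m, k₀ ≤ m → x m ∈ thickening (δ/2) A := by
        intro m hm
        induction m, hm using Nat.le_induction with
        | base => exact hk₀
        | succ m hm ih => exact h m (le_trans hk₀N hm) ih
      obtain ⟨m, hm1, hm2⟩ := frequently_atTop.mp hfreqC k₀
      exact Set.disjoint_left.mp hdisj2 (hall m hm1) hm2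
    obtain ⟨k, hkN, hkA, hkA'⟩ := key
    have h1 := (hN k hkN).1
    have h2 := (hN (k+1) (by omega)).2
    have hkC : x (k+1) ∈ thickening (δ/2) C := h2.resolve_left hkA'
    obtain ⟨c, hcC, hc⟩ := Metric.mem_thickening_iff.mp hkC
    have hxkC : x k ∈ thickening δ C := by
      refine Metric.mem_thickening_iff.mpr ⟨c, hcC, ?_⟩
      have hd : dist (x k) (x (k+1)) < δ/2 := by
        rw [dist_comm, dist_eq_norm]; exact h1
      calc dist (x k) c ≤ dist (x k) (x (k+1)) + dist (x (k+1)) c := dist_triangle _ _ _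
        _ < δ/2 + δ/2 := add_lt_add hd hc
        _ = δ := by ring
    exact Set.disjoint_left.mp hdisj (thickening_mono (by linarith) A hkA) hxkC
  exact ⟨hBne.image f, hBconn.image f hf.continuousOn⟩
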